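/- Let R be a commutative local ring, and let A ∈ M₂(R) with det(A) ∈ J(R) and tr(A²) ∈ J(R). Then A has a generalized Hirano inverse; in fact A² is quasinilpotent in M₂(R). -/

import Mathlib

/-- `a` is quasinilpotent: `1 + a*x` is a unit for every `x` commuting with `a`. -/
def IsQuasinilpotent {R : Type*} [Ring R] (a : R) : Prop :=
  ∀ x : R, x * a = a * x → IsUnit (1 + a * x)

/-- `x` lies in the double commutant of `a`. -/
def InDoubleCommutant {R : Type*} [Ring R] (a x : R) : Prop :=
  ∀ y : R, y * a = a * y → x * y = y * x

/-- `b` is a generalized Hirano inverse of `a`. -/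
def IsGHInverse {R : Type*} [Ring R] (a b : R) : Prop :=
  b * a * b = b ∧ InDoubleCommutant a b ∧ IsQuasinilpotent (a ^ 2 - a * b)

/-- Cayley–Hamilton for 2×2 matrices. -/
lemma ch2 {k : Type*} [CommRing k] (M : Matrix (Fin 2) (Fin 2) k) :
    M * M = M.trace • M - M.det • (1 : Matrix (Fin 2) (Fin 2) k) := by
  ext i j
  fin_cases i <;> fin_cases j <;>
    simp [Matrix.mul_apply, Matrix.trace_fin_two, Matrix.det_fin_two, Fin.sum_univ_succ,
      Matrix.one_apply] <;> ring

theorem stmt8 {R : Type*} [CommRing R] [IsLocalRing R] (A : Matrix (Fin 2) (Fin 2) R)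
    (hdet : A.det ∈ Ideal.jacobson (⊥ : Ideal R))
    (htr : (A ^ 2).trace ∈ Ideal.jacobson (⊥ : Ideal R)) :
    (∃ B, IsGHInverse A B) ∧ IsQuasinilpotent (A ^ 2) := by
  rw [IsLocalRing.jacobson_eq_maximalIdeal ⊥ bot_ne_top] at hdet htr
  have hq : IsQuasinilpotent (A ^ 2) := by
    intro X hX
    set φ := IsLocalRing.residue R
    set f := φ.mapMatrix (m := Fin 2)
    set B := f A with hB
    set Y := f X with hY
    -- residue of det and trace are zero
    have hd0 : φ A.det = 0 := (IsLocalRing.residue_eq_zero_iff _).2 hdet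
    have ht0 : (B * B).trace = 0 := by
      have : φ (A ^ 2).trace = 0 := (IsLocalRing.residue_eq_zero_iff _).2 htr
      have h2 : B * B = f (A ^ 2) := by rw [sq, map_mul]
      rw [h2]
      simpa [f, Matrix.trace, Matrix.diag] using this
    have hdd0 : (B * B).det = 0 := by
      rw [Matrix.det_mul, hB, ← RingHom.map_det, hd0, mul_zero]
    -- B^4 = 0 by Cayley–Hamilton
    have hB4 : (B * B) * (B * B) = 0 := by
      rw [ch2 (B * B), ht0, hdd0]; simp
    -- nilpotency of B*B*Y
    have hcom : Y * (B * B) = (B * B) * Y := by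
      have : f (X * A ^ 2) = f (A ^ 2 * X) := by rw [hX]
      simp only [sq, map_mul] at this
      exact this
    have hn : (B * B * Y) * (B * B * Y) = 0 := by
      calc (B * B * Y) * (B * B * Y) = (B * B) * (B * B) * (Y * Y) := by
            rw [mul_assoc (B*B) Y, ← mul_assoc Y, hcom]; noncomm_ring
        _ = 0 := by rw [hB4, zero_mul]
    -- 1 + B*B*Y is a unit in M₂(k)
    have hunit : IsUnit (1 + B * B * Y) := by
      have h1 : (1 + B * B * Y) * (1 - B * B * Y) = 1 := by
        have : (1 + B * B * Y) * (1 - B * B * Y) = 1 - (B * B * Y) * (B * B * Y) := by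
          noncomm_ring
        rw [this, hn, sub_zero]
      have h2 : (1 - B * B * Y) * (1 + B * B * Y) = 1 := by
        have : (1 - B * B * Y) * (1 + B * B * Y) = 1 - (B * B * Y) * (B * B * Y) := by
          noncomm_ring
        rw [this, hn, sub_zero]
      exact ⟨⟨1 + B * B * Y, 1 - B * B * Y, h1, h2⟩, rfl⟩
    -- transfer back
    have hres : φ ((1 + A ^ 2 * X).det) ≠ 0 := by
      have he : φ ((1 + A ^ 2 * X).det) = (1 + B * B * Y).det := by
        rw [RingHom.map_det]
        congr 1
        rw [map_add, map_one, map_mul, sq, map_mul]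
      rw [he]
      exact ((Matrix.isUnit_iff_isUnit_det _).1 hunit).ne_zero
    have hdetu : IsUnit ((1 + A ^ 2 * X).det) := by
      by_contra hnu
      exact hres ((IsLocalRing.residue_eq_zero_iff _).2 (IsLocalRing.mem_maximalIdeal _ |>.2 hnu))
    exact (Matrix.isUnit_iff_isUnit_det _).2 hdetu
  refine ⟨⟨0, ?_, ?_, ?_⟩, hq⟩
  · simp
  · intro y _; simp
  · simpa using hq
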